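/- For n ≥ 3, the group of units of the monoid DPS_n, namely {α ∈ DPS_n : the domain of α has n elements}, is isomorphic (as a group, equivalently as a monoid) to the symmetric group on the set {1,2,...,n−1} of n−1 elements. -/

import Mathlib

namespace DPSPaper

instance instMonoidPFun {V : Type*} : Monoid (V →. V) where
  mul f g := g.comp f
  one := PFun.id V
  mul_assoc a b c := (PFun.comp_assoc c b a).symm
  one_mul := PFun.comp_id
  mul_one := PFun.id_comp

/-- The geodesic distance in the star graph `S_n` on vertices `{0,1,...,n-1}`. -/
def starDist (n : ℕ) (x y : Fin n) : ℕ :=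
  if x = y then 0 else if (x : ℕ) = 0 ∨ (y : ℕ) = 0 then 1 else 2

/-- Injectivity of a partial map. -/
def PInj {n : ℕ} (α : Fin n →. Fin n) : Prop :=
  ∀ ⦃x y a : Fin n⦄, a ∈ α x → a ∈ α y → x = y

/-- `α` is a partial isometry of the star graph `S_n`. -/
def IsStarPI {n : ℕ} (α : Fin n →. Fin n) : Prop :=
  PInj α ∧ ∀ ⦃x y u v : Fin n⦄, u ∈ α x → v ∈ α y → starDist n u v = starDist n x y

/-- The set of all partial isometries of `S_n`. -/
def DPSset (n : ℕ) : Set (Fin n →. Fin n) := { α | IsStarPI α }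

-- aux: a total injective map fixing 0 is a star partial isometry
lemma aux_isStarPI {n : ℕ} [NeZero n] (f : Fin n → Fin n) (hinj : Function.Injective f)
    (h0 : f 0 = 0) : IsStarPI (PFun.lift f) := by
  constructor
  · intro x y a hx hy
    simp only [PFun.lift, Part.mem_some_iff] at hx hy
    exact hinj (hx.symm.trans hy)
  · intro x y u v hu hv
    simp only [PFun.lift, Part.mem_some_iff] at hu hv
    subst hu hv
    have hz : ∀ z : Fin n, (f z : ℕ) = 0 ↔ (z : ℕ) = 0 := by
      intro z
      rw [← Fin.val_zero n, Fin.val_eq_val, Fin.val_eq_val]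
      constructor
      · intro h; exact hinj (h.trans h0.symm)
      · rintro rfl; exact h0
    unfold starDist
    by_cases hxy : x = y
    · simp [hxy]
    · have : f x ≠ f y := fun h => hxy (hinj h)
      simp only [this, hxy, if_false, hz]


/-- For `n ≥ 3`, the group of units `{α ∈ DPS_n : |Dom α| = n}` of `DPS_n` is isomorphic
to the symmetric group on `n-1` elements: there is an injective monoid homomorphism from
`Perm (Fin (n-1))` into the monoid of partial maps whose range is exactly this set. -/
theorem statement4 (n : ℕ) (hn : 3 ≤ n) :
    ∃ φ : Equiv.Perm (Fin (n - 1)) →* (Fin n →. Fin n),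
      Function.Injective φ ∧
      Set.range φ = { α : Fin n →. Fin n | IsStarPI α ∧ α.Dom.ncard = n } := by
  haveI : NeZero n := ⟨by omega⟩
  -- the equivalence between Fin (n-1) and nonzero vertices
  let e : Fin (n - 1) ≃ {x : Fin n // x ≠ 0} :=
    { toFun := fun i => ⟨⟨(i : ℕ) + 1, by omega⟩, by
        simp [Fin.ext_iff]⟩
      invFun := fun x => ⟨(x : ℕ) - 1, by
        have h1 : (x : Fin n) ≠ 0 := x.2
        have h2 : ((x : Fin n) : ℕ) ≠ 0 := by
          exact fun h => h1 (Fin.ext (h.trans (Fin.val_zero n).symm))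
        have := (x : Fin n).isLt
        omega⟩
      left_inv := fun i => by simp
      right_inv := fun x => by
        have h1 : (x : Fin n) ≠ 0 := x.2
        have h2 : ((x : Fin n) : ℕ) ≠ 0 := by exact fun h => h1 (Fin.ext (h.trans (Fin.val_zero n).symm))
        have := (x : Fin n).isLt
        ext
        simp
        omega }
  let E : Equiv.Perm (Fin (n - 1)) →* Equiv.Perm (Fin n) := Equiv.Perm.extendDomainHom e
  refine ⟨{ toFun := fun σ => PFun.lift (E σ⁻¹)
            map_one' := by simp [PFun.lift]; rfl
            map_mul' := fun σ τ => by
              show PFun.lift (E (σ * τ)⁻¹) = (PFun.lift (E τ⁻¹)).comp (PFun.lift (E σ⁻¹))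
              rw [← PFun.coe_comp]
              apply congrArg PFun.lift
              funext x
              simp [mul_inv_rev, map_mul, Equiv.Perm.mul_apply] }, ?_, ?_⟩
  · intro σ τ h
    simp only [MonoidHom.coe_mk, OneHom.coe_mk] at h
    have h1 := PFun.lift_injective h
    have h2 : E σ⁻¹ = E τ⁻¹ := Equiv.coe_fn_injective h1
    have h3 := (Equiv.Perm.extendDomainHom_injective e) h2
    simpa using congrArg (·⁻¹) h3
  · ext α
    simp only [Set.mem_range, Set.mem_setOf_eq, MonoidHom.coe_mk, OneHom.coe_mk]
    constructor
    · rintro ⟨σ, rfl⟩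
      have h0 : (E σ⁻¹ : Equiv.Perm (Fin n)) 0 = 0 := by
        have h : ¬ ((0 : Fin n) ≠ 0) := by simp
        exact Equiv.Perm.extendDomain_apply_not_subtype σ⁻¹ e h
      refine ⟨aux_isStarPI _ (E σ⁻¹).injective h0, ?_⟩
      rw [PFun.dom_coe, Set.ncard_univ, Nat.card_eq_fintype_card, Fintype.card_fin]
    · rintro ⟨⟨hinj, hiso⟩, hcard⟩
      -- the domain is everything
      have hdom : α.Dom = Set.univ := by
        apply Set.eq_of_subset_of_ncard_le (Set.subset_univ _)
        rw [hcard, Set.ncard_univ, Nat.card_eq_fintype_card, Fintype.card_fin]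
      have hdom' : ∀ x, (α x).Dom := by
        intro x
        have : x ∈ α.Dom := hdom ▸ Set.mem_univ x
        exact this
      set f : Fin n → Fin n := fun x => (α x).get (hdom' x) with hf
      have hmem : ∀ x, f x ∈ α x := fun x => Part.get_mem _
      have hα : α = PFun.lift f := by
        funext x
        apply Part.ext'
        · simp [PFun.lift, hdom' x]
        · intro h1 h2
          simp [PFun.lift]
          rfl
      have hfinj : Function.Injective f := fun x y h =>
        hinj (hmem x) (h ▸ hmem y)
      have hfsurj : Function.Surjective f := Finite.surjective_of_injective hfinj
      -- f fixes 0
      have hf0 : f 0 = 0 := by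
        by_contra h0
        -- then f x = 0 for all x ≠ 0
        have key : ∀ x : Fin n, x ≠ 0 → f x = 0 := by
          intro x hx
          have := hiso (hmem 0) (hmem x)
          have hd : starDist n 0 x = 1 := by
            rw [starDist, if_neg (Ne.symm hx), if_pos (Or.inl (Fin.val_zero n))]
          rw [hd] at this
          unfold starDist at this
          by_cases hfe : f 0 = f x
          · simp [hfe] at this
          · simp only [hfe, if_false] at this
            rcases (by
              by_contra hc
              push_neg at hc
              simp [hc.1, hc.2] at this : (f 0 : ℕ) = 0 ∨ (f x : ℕ) = 0) with h | h
            · exact absurd (Fin.ext (by simp [h])) h0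
            · exact Fin.ext (by simp [h])
        set a : Fin n := ⟨1, by omega⟩ with ha
        set b : Fin n := ⟨2, by omega⟩ with hb
        have h1 : a ≠ 0 := by simp [ha, Fin.ext_iff]
        have h2 : b ≠ 0 := by simp [hb, Fin.ext_iff]
        have h12 : a ≠ b := by simp [ha, hb, Fin.ext_iff]
        exact h12 (hfinj ((key a h1).trans (key b h2).symm))
      -- build the permutation
      let g : Equiv.Perm (Fin n) := Equiv.ofBijective f ⟨hfinj, hfsurj⟩
      have hg : ∀ x, g x = f x := fun x => rfl
      have hgp : ∀ x : Fin n, x ≠ 0 ↔ g x ≠ 0 := by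
        intro x
        rw [hg]
        constructor
        · intro hx h
          exact hx (hfinj (h.trans hf0.symm))
        · intro h hx
          subst hx; exact h hf0
      let σ : Equiv.Perm {x : Fin n // x ≠ 0} := g.subtypePerm (fun x => (hgp x).symm)
      let τ : Equiv.Perm (Fin (n - 1)) := (e.symm.permCongr σ)
      refine ⟨τ⁻¹, ?_⟩
      rw [hα]
      apply congrArg PFun.lift
      have : (E (τ⁻¹)⁻¹ : Equiv.Perm (Fin n)) = g := by
        rw [inv_inv]
        refine Equiv.ext fun z => ?_
        show (τ.extendDomain e) z = g z
        by_cases hz : z ≠ 0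
        · rw [show z = ((⟨z, hz⟩ : {x : Fin n // x ≠ 0}) : Fin n) from rfl,
            Equiv.Perm.extendDomain_apply_subtype _ e hz]
          simp [τ, σ, Equiv.permCongr_apply]
        · push_neg at hz
          subst hz
          rw [Equiv.Perm.extendDomain_apply_not_subtype _ e (by simp)]
          rw [hg, hf0]
      rw [this]
      rfl

end DPSPaper
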